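/- Let q be a prime power, n a positive integer, and for i = 1, ..., n let S_i ⊆ F_q^* with 0 < |S_i| < q-1, not all |S_i| equal to q-2. Set T_i = F_q^* \ S_i, t_i = |T_i|, and m = \prod_{i=1}^n t_i. Let P(X_1,...,X_n) = \prod_{i=1}^n \prod_{x ∈ S_i}(X_i - x). Suppose that for every i the set T_i is contained in a coset γ_i H_i of a proper multiplicative subgroup H_i of F_q^* of order d_i. Then for every (k_1, ..., k_n) with each k_i a positive multiple of d_i and 0 < k_i < q-1, the support of the reduction of X_1^{k_1} ··· X_n^{k_n} P modulo {X_1^{q-1} - 1, ..., X_n^{q-1} - 1} is disjoint from U(q, m-1, n). -/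
import Mathlib


/-- Reduction of an exponent vector modulo `q-1` in each coordinate. -/
noncomputable def reduceExp (q : ℕ) {n : ℕ} (e : Fin n →₀ ℕ) : Fin n →₀ ℕ :=
  Finsupp.mapRange (· % (q - 1)) (Nat.zero_mod _) e

/-- Reduction of a polynomial modulo `{X_1^{q-1} - 1, …, X_n^{q-1} - 1}`: each exponent of
each variable is replaced by its residue modulo `q-1`. -/
noncomputable def reduceMod {F : Type*} [Field F] (q : ℕ) {n : ℕ}
    (Q : MvPolynomial (Fin n) F) : MvPolynomial (Fin n) F :=
  Q.support.sum fun e => MvPolynomial.monomial (reduceExp q e) (Q.coeff e)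

/-- The exponent vector `e` belongs to the set `U(q,m,n)`, i.e. the monomial
`X_1^{e_1} ⋯ X_n^{e_n}` lies in `M(q,n)` and `∏_{s=1}^n (q-1-e_s) ≤ m`. -/
def inU (q m : ℕ) {n : ℕ} (e : Fin n →₀ ℕ) : Prop :=
  (∀ i, e i < q - 1) ∧ ∏ s : Fin n, (q - 1 - e s) ≤ m

open MvPolynomial Finset

lemma aux_dvd_iff_mod {m a e : ℕ} (he : e < m) : m ∣ a + (m - e) ↔ a % m = e := by
  have h3 : e + (m - e) = m := by omega
  constructor
  · intro h
    have hm0 : (0 : ℕ) ≡ e + (m - e) [MOD m] := by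
      rw [h3]; simp [Nat.ModEq, Nat.mod_self]
    have h0 : a + (m - e) ≡ e + (m - e) [MOD m] :=
      (Nat.modEq_zero_iff_dvd.mpr h).trans hm0
    have ha : a ≡ e [MOD m] := Nat.ModEq.add_right_cancel' _ h0
    rw [Nat.ModEq, Nat.mod_eq_of_lt he] at ha
    exact ha
  · intro h
    have h1 : a ≡ e [MOD m] := by
      rw [Nat.ModEq, Nat.mod_eq_of_lt he]; exact h
    have h2 : a + (m - e) ≡ e + (m - e) [MOD m] := h1.add_right _
    rw [h3] at h2
    have : a + (m - e) ≡ 0 [MOD m] := h2.trans (Nat.modEq_zero_iff_dvd.mpr dvd_rfl)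
    exact Nat.modEq_zero_iff_dvd.mp this

lemma aux_sum_pow_units {F : Type*} [Field F] [Fintype F] [DecidableEq F] {q : ℕ}
    (hq : Fintype.card F = q) (j : ℕ) :
    ∑ x : Fˣ, (x : F) ^ j = if (q - 1) ∣ j then -1 else 0 := by
  subst hq
  simpa using FiniteField.sum_pow_units F j

lemma reduceExp_apply (q : ℕ) {n : ℕ} (a : Fin n →₀ ℕ) (i : Fin n) :
    reduceExp q a i = a i % (q - 1) := rfl

lemma aux_orth {F : Type*} [Field F] [Fintype F] [DecidableEq F] {q n : ℕ}
    (hq : Fintype.card F = q) (e a : Fin n →₀ ℕ) (he : ∀ i, e i < q - 1) :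
    ∑ x : Fin n → Fˣ, ∏ i, (x i : F) ^ (a i + (q - 1 - e i))
      = if reduceExp q a = e then (-1 : F) ^ n else 0 := by
  rw [← Fintype.piFinset_univ,
    Finset.sum_prod_piFinset (Finset.univ : Finset Fˣ)
      (fun i (u : Fˣ) => (u : F) ^ (a i + (q - 1 - e i)))]
  have hfac : ∀ i : Fin n, (∑ u : Fˣ, (u : F) ^ (a i + (q - 1 - e i)))
      = if (q - 1) ∣ (a i + (q - 1 - e i)) then (-1 : F) else 0 :=
    fun i => aux_sum_pow_units hq _
  by_cases hcase : reduceExp q a = e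
  · rw [if_pos hcase]
    have hmod : ∀ i, a i % (q - 1) = e i := fun i => by
      rw [← reduceExp_apply q a i, hcase]
    calc ∏ i, ∑ u : Fˣ, (u : F) ^ (a i + (q - 1 - e i))
        = ∏ _i : Fin n, (-1 : F) := by
          refine Finset.prod_congr rfl fun i _ => ?_
          rw [hfac i, if_pos ((aux_dvd_iff_mod (he i)).mpr (hmod i))]
      _ = (-1 : F) ^ n := by simp
  · rw [if_neg hcase]
    have : ∃ i, a i % (q - 1) ≠ e i := by
      by_contra h
      push_neg at h
      exact hcase (Finsupp.ext fun i => h i)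
    obtain ⟨i, hi⟩ := this
    refine Finset.prod_eq_zero (Finset.mem_univ i) ?_
    rw [hfac i, if_neg (fun hdvd => hi ((aux_dvd_iff_mod (he i)).mp hdvd))]

lemma coeff_reduceMod {F : Type*} [Field F] {q n : ℕ}
    (Q : MvPolynomial (Fin n) F) (e : Fin n →₀ ℕ) :
    (reduceMod q Q).coeff e
      = ∑ a ∈ Q.support, if reduceExp q a = e then Q.coeff a else 0 := by
  classical
  unfold reduceMod
  rw [MvPolynomial.coeff_sum]
  exact Finset.sum_congr rfl fun a _ => MvPolynomial.coeff_monomial _ _ _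

lemma aux_sum_formula {F : Type*} [Field F] [Fintype F] [DecidableEq F] {q n : ℕ}
    (hq : Fintype.card F = q) (Q : MvPolynomial (Fin n) F) (e : Fin n →₀ ℕ)
    (he : ∀ i, e i < q - 1) :
    ∑ x : Fin n → Fˣ, (MvPolynomial.eval (fun i => (x i : F)) Q) * ∏ i, (x i : F) ^ (q - 1 - e i)
      = (-1 : F) ^ n * (reduceMod q Q).coeff e := by
  classical
  calc ∑ x : Fin n → Fˣ, (MvPolynomial.eval (fun i => (x i : F)) Q)
          * ∏ i, (x i : F) ^ (q - 1 - e i)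
      = ∑ x : Fin n → Fˣ, ∑ a ∈ Q.support,
          Q.coeff a * ∏ i, (x i : F) ^ (a i + (q - 1 - e i)) := by
        refine Fintype.sum_congr _ _ fun x => ?_
        rw [MvPolynomial.eval_eq', Finset.sum_mul]
        refine Finset.sum_congr rfl fun a _ => ?_
        rw [mul_assoc, ← Finset.prod_mul_distrib]
        simp_rw [pow_add]
    _ = ∑ a ∈ Q.support, Q.coeff a
          * ∑ x : Fin n → Fˣ, ∏ i, (x i : F) ^ (a i + (q - 1 - e i)) := by
        rw [Finset.sum_comm]
        exact Finset.sum_congr rfl fun a _ => (Finset.mul_sum _ _ _).symm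
    _ = ∑ a ∈ Q.support, Q.coeff a * (if reduceExp q a = e then (-1 : F) ^ n else 0) := by
        exact Finset.sum_congr rfl fun a _ => by rw [aux_orth hq e a he]
    _ = (-1 : F) ^ n * (reduceMod q Q).coeff e := by
        rw [coeff_reduceMod, Finset.mul_sum]
        refine Finset.sum_congr rfl fun a _ => ?_
        split_ifs <;> ring

theorem shifted_support_avoids_U_of_complements_in_cosets
    {F : Type*} [Field F] [Fintype F] [DecidableEq F] {q n : ℕ}
    (hq : Fintype.card F = q) (hn : 0 < n)
    (S : Fin n → Finset F) (hS0 : ∀ i, (0 : F) ∉ S i)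
    (hScard : ∀ i, 0 < (S i).card ∧ (S i).card < q - 1)
    (hnotall : ¬ ∀ i, (S i).card = q - 2)
    (T : Fin n → Finset F) (hT : ∀ i, T i = Finset.univ.filter (· ≠ (0 : F)) \ S i)
    (t : Fin n → ℕ) (ht : ∀ i, t i = (T i).card)
    (m : ℕ) (hm : m = ∏ i, t i)
    (P : MvPolynomial (Fin n) F)
    (hP : P = ∏ i, ∏ x ∈ S i, (MvPolynomial.X i - MvPolynomial.C x))
    (H : Fin n → Subgroup Fˣ) (hHproper : ∀ i, H i ≠ ⊤)
    (d : Fin n → ℕ) (hd : ∀ i, Nat.card (H i) = d i)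
    (γ : Fin n → Fˣ)
    (hsub : ∀ i, ∀ x ∈ T i, ∃ h ∈ H i, x = ((γ i * h : Fˣ) : F)) :
    ∀ k : Fin n →₀ ℕ, (∀ i, 0 < k i ∧ k i < q - 1 ∧ d i ∣ k i) →
      ∀ e ∈ (reduceMod q (MvPolynomial.monomial k (1 : F) * P)).support,
        ¬ inU q (m - 1) e := by
  intro k hk e he hU
  classical
  obtain ⟨heU, hprod⟩ := hU
  set Q : MvPolynomial (Fin n) F := MvPolynomial.monomial k (1 : F) * P with hQ
  have hcoeffQ : (reduceMod q Q).coeff e ≠ 0 := MvPolynomial.mem_support_iff.mp he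
  -- basic cardinality facts
  have hSsub : ∀ i, S i ⊆ Finset.univ.filter (· ≠ (0 : F)) := fun i s hs =>
    Finset.mem_filter.mpr ⟨Finset.mem_univ _, fun h0 => hS0 i (h0 ▸ hs)⟩
  have hfiltercard : (Finset.univ.filter (· ≠ (0 : F))).card = q - 1 := by
    rw [Finset.filter_ne', Finset.card_erase_of_mem (Finset.mem_univ _), Finset.card_univ, hq]
  have hti : ∀ i, t i = q - 1 - (S i).card := fun i => by
    rw [ht, hT, Finset.card_sdiff_of_subset (hSsub i), hfiltercard]
  have htpos : ∀ i, 0 < t i := fun i => by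
    have := (hScard i).2; rw [hti i]; omega
  have hmpos : 0 < m := hm ▸ Finset.prod_pos fun i _ => htpos i
  -- the constant factor
  set c : F := ∏ i, (γ i : F) ^ (k i) with hc
  have hc0 : c ≠ 0 :=
    Finset.prod_ne_zero_iff.mpr fun i _ => pow_ne_zero _ (Units.ne_zero _)
  -- evaluation identity
  have heval : ∀ x : Fin n → Fˣ,
      MvPolynomial.eval (fun i => (x i : F)) Q = c * MvPolynomial.eval (fun i => (x i : F)) P := by
    intro x
    rw [hQ, map_mul, MvPolynomial.eval_monomial, one_mul, Finsupp.prod_pow]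
    by_cases hxS : ∃ i, (x i : F) ∈ S i
    · obtain ⟨i, hi⟩ := hxS
      have hP0 : MvPolynomial.eval (fun i => (x i : F)) P = 0 := by
        rw [hP, map_prod]
        refine Finset.prod_eq_zero (Finset.mem_univ i) ?_
        rw [map_prod]
        refine Finset.prod_eq_zero hi ?_
        simp
      rw [hP0, mul_zero, mul_zero]
    · push_neg at hxS
      have hpow : ∀ i, (x i : F) ^ (k i) = (γ i : F) ^ (k i) := by
        intro i
        have hxT : (x i : F) ∈ T i := by
          rw [hT]
          exact Finset.mem_sdiff.mpr
            ⟨Finset.mem_filter.mpr ⟨Finset.mem_univ _, (x i).ne_zero⟩, hxS i⟩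
        obtain ⟨h, hhH, hxeq⟩ := hsub i _ hxT
        obtain ⟨ci, hci⟩ := (hk i).2.2
        have hhd : h ^ (d i) = 1 := by
          have h1 : (⟨h, hhH⟩ : H i) ^ (Nat.card (H i)) = 1 := pow_card_eq_one'
          rw [hd i] at h1
          simpa using congrArg ((↑) : H i → Fˣ) h1
        have hh1 : h ^ (k i) = 1 := by
          rw [hci, pow_mul, hhd, one_pow]
        have hu : (γ i * h) ^ (k i) = γ i ^ (k i) := by
          rw [mul_pow, hh1, mul_one]
        rw [hxeq, ← Units.val_pow_eq_pow_val, hu, Units.val_pow_eq_pow_val]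
      congr 1
      exact Finset.prod_congr rfl fun i _ => hpow i
  have hq2 : 2 ≤ q := hq ▸ Fintype.one_lt_card
  -- key identity
  have key : (-1 : F) ^ n * (reduceMod q Q).coeff e
      = c * ((-1 : F) ^ n * (reduceMod q P).coeff e) := by
    rw [← aux_sum_formula hq Q e heU, ← aux_sum_formula hq P e heU, Finset.mul_sum]
    exact Fintype.sum_congr _ _ fun x => by rw [heval x, mul_assoc]
  -- degree bound for P
  have hdegP : ∀ i, MvPolynomial.degreeOf i P ≤ (S i).card := by
    intro i
    rw [hP]
    calc MvPolynomial.degreeOf i (∏ j, ∏ x ∈ S j, (MvPolynomial.X j - MvPolynomial.C x))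
        ≤ ∑ j, MvPolynomial.degreeOf i (∏ x ∈ S j, (MvPolynomial.X j - MvPolynomial.C x)) :=
          MvPolynomial.degreeOf_prod_le _ _ _
      _ ≤ ∑ j, ∑ x ∈ S j, MvPolynomial.degreeOf i (MvPolynomial.X j - MvPolynomial.C x) :=
          Finset.sum_le_sum fun j _ => MvPolynomial.degreeOf_prod_le _ _ _
      _ ≤ ∑ j, ∑ _x ∈ S j, (if i = j then 1 else 0) := by
          refine Finset.sum_le_sum fun j _ => Finset.sum_le_sum fun s _ => ?_
          have h1 : MvPolynomial.X j - MvPolynomial.C s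
              = MvPolynomial.X j + MvPolynomial.C (-s) := by
            rw [map_neg, sub_eq_add_neg]
          rw [h1]
          refine le_trans (MvPolynomial.degreeOf_add_le _ _ _) ?_
          rw [MvPolynomial.degreeOf_C, MvPolynomial.degreeOf_X]
          simp
      _ = (S i).card := by
          simp [Finset.sum_ite_eq]
  have hsupP : ∀ a ∈ P.support, ∀ i, a i < q - 1 := by
    intro a ha i
    have h1 : a i ≤ MvPolynomial.degreeOf i P := MvPolynomial.monomial_le_degreeOf i ha
    have := (hScard i).2
    have := hdegP i
    omega
  have hredP : (reduceMod q P).coeff e = P.coeff e := by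
    rw [coeff_reduceMod]
    have hid : ∀ a ∈ P.support,
        (if reduceExp q a = e then P.coeff a else 0) = (if a = e then P.coeff a else 0) := by
      intro a ha
      have : reduceExp q a = a :=
        Finsupp.ext fun i => by rw [reduceExp_apply, Nat.mod_eq_of_lt (hsupP a ha i)]
      rw [this]
    rw [Finset.sum_congr rfl hid, Finset.sum_ite_eq' P.support e P.coeff]
    by_cases hmem : e ∈ P.support
    · rw [if_pos hmem]
    · rw [if_neg hmem, MvPolynomial.notMem_support_iff.mp hmem]
  have hneg1 : ((-1 : F) ^ n) ≠ 0 := pow_ne_zero _ (neg_ne_zero.mpr one_ne_zero)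
  have hPe : P.coeff e ≠ 0 := by
    intro h0
    apply hcoeffQ
    rw [hredP, h0, mul_zero, mul_zero] at key
    exact (mul_eq_zero.mp key).resolve_left hneg1
  have heLe : ∀ i, e i ≤ (S i).card := fun i =>
    le_trans (MvPolynomial.monomial_le_degreeOf i (MvPolynomial.mem_support_iff.mpr hPe))
      (hdegP i)
  have hfin : m ≤ ∏ s, (q - 1 - e s) := by
    rw [hm]
    refine Finset.prod_le_prod' fun i _ => ?_
    have h1 := heLe i
    have h2 := (hScard i).2
    rw [hti i]
    omega
  omega
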